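/- Let y₁, y₂ > 0 be real numbers satisfying 27·y₁⁴·y₂⁴ − 18·y₁²·y₂² + 4·y₁² + 4·y₂² = 1 and (y₁, y₂) ≠ (1/√3, 1/√3). Then the degree-6 polynomial E (leading coefficient y₁² + y₂² + 2) has exactly four distinct complex roots, all of them real: two roots of multiplicity 2 and two roots of multiplicity 1. -/

import Mathlib

open Polynomial

set_option maxHeartbeats 1000000

/-- The polynomial `E` viewed over ℂ (degree 6, leading coefficient `y₁²+y₂²+2`). -/
noncomputable def EPoly (y₁ y₂ : ℝ) : Polynomial ℂ :=
  C ((y₁ : ℂ)^2) * (X^2 + 4*X + 1)^3 + C ((y₂ : ℂ)^2) * (X^2 - 2*X - 2)^3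
    + 2*X^6 + 6*X^5 - 15*X^4 - 40*X^3 - 15*X^2 + 6*X + 2

section Aux


noncomputable def fE (a t : ℝ) : ℝ := a*(t^2+4*t+1)^2 + (t^2+2*t)*(t^2-2*t-2)

lemma fE_cont (a : ℝ) : Continuous (fE a) := by
  unfold fE; continuity

lemma quad_root_eq {A B C r₁ r₂ : ℝ} (h1 : A*r₁^2+B*r₁+C=0) (h2 : A*r₂^2+B*r₂+C=0)
    (hs : A*(r₁+r₂)+B ≠ 0) : r₁ = r₂ := by
  by_contra hne
  apply hs
  have h3 : (r₁ - r₂) * (A*(r₁+r₂)+B) = 0 := by linear_combination h1 - h2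
  rcases mul_eq_zero.mp h3 with h | h
  · exact absurd (sub_eq_zero.mp h) hne
  · exact h

lemma key (a b : ℝ) (ha0 : 0 < a) (hb0 : 0 < b)
    (h : 27*a^2*b^2 - 18*a*b + 4*a + 4*b = 1) (hne : ¬(a = 1/3 ∧ b = 1/3)) :
    ∃ u : ℝ, 0 < u ∧ u < 1 ∧ 2*u^2+2*u-1 ≠ 0 ∧
      a = -(u^2+2*u)*(u^2-2*u-2)/(u^2+4*u+1)^2 ∧
      b = (1-u^2)*(u^2+4*u+1)/(u^2-2*u-2)^2 := by
  have hs2 : (54*a^2*b-18*a+4)^2 = 16*(1-3*a)^3 := by linear_combination (108*a^2)*h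
  have ha3 : a ≤ 1/3 := by
    by_contra h'
    push_neg at h'
    have h1 : (0:ℝ) < 3*a-1 := by linarith
    nlinarith [pow_pos h1 3, sq_nonneg (54*a^2*b-18*a+4)]
  have ha3' : a < 1/3 := by
    rcases lt_or_eq_of_le ha3 with h' | h'
    · exact h'
    · exfalso
      apply hne
      constructor
      · exact h'
      · have hb13 : 54*a^2*b-18*a+4 = 0 := by nlinarith [sq_nonneg (54*a^2*b-18*a+4)]
        nlinarith [hb13]
  set w := Real.sqrt 3 with hwdef
  have hw2 : w^2 = 3 := Real.sq_sqrt (by norm_num)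
  have hwpos : 0 < w := Real.sqrt_pos.mpr (by norm_num)
  have hw17 : 1.7 < w := by nlinarith
  have hw18 : w < 1.8 := by nlinarith
  set u₀ : ℝ := (w-1)/2 with hu₀def
  have hu₀pos : 0 < u₀ := by rw [hu₀def]; linarith
  have hu₀lt : u₀ < 1 := by rw [hu₀def]; linarith
  have hu₀zero : 2*u₀^2+2*u₀-1 = 0 := by rw [hu₀def]; linear_combination (1/2)*hw2
  have hfc : Continuous (fE a) := fE_cont a
  have hf0 : fE a 0 = a := by unfold fE; ring
  have hfu₀ : fE a u₀ = 27/4*a - 9/4 := by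
    unfold fE
    rw [hu₀def]
    linear_combination ((1/16)*(1+a)*w^2 + ((3*a-1)/4)*w + (33*a-15)/16) * hw2
  have hfu₀neg : fE a u₀ < 0 := by rw [hfu₀]; linarith
  have main : ∀ u : ℝ, 0 < u → u < 1 → fE a u = 0 →
      (0 < 2*u^2+2*u-1 → 54*a^2*b-18*a+4 < 0) →
      (2*u^2+2*u-1 < 0 → 0 < 54*a^2*b-18*a+4) →
      2*u^2+2*u-1 ≠ 0 →
      ∃ u : ℝ, 0 < u ∧ u < 1 ∧ 2*u^2+2*u-1 ≠ 0 ∧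
        a = -(u^2+2*u)*(u^2-2*u-2)/(u^2+4*u+1)^2 ∧
        b = (1-u^2)*(u^2+4*u+1)/(u^2-2*u-2)^2 := by
    intro u hu0 hu1 hfu hsgn1 hsgn2 hcrit
    have hq1 : 0 < u^2+4*u+1 := by nlinarith
    have hq2 : u^2-2*u-2 < 0 := by nlinarith
    have hq1' : (u^2+4*u+1) ≠ 0 := ne_of_gt hq1
    have hq2' : (u^2-2*u-2) ≠ 0 := ne_of_lt hq2
    have hA : a*(u^2+4*u+1)^2 = -(u^2+2*u)*(u^2-2*u-2) := by
      unfold fE at hfu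
      linear_combination hfu
    have ha : a = -(u^2+2*u)*(u^2-2*u-2)/(u^2+4*u+1)^2 := by
      field_simp
      linear_combination hA
    set b' : ℝ := (1-u^2)*(u^2+4*u+1)/(u^2-2*u-2)^2 with hb'def
    have hQb : 27*a^2*b^2 + (4-18*a)*b + (4*a-1) = 0 := by linear_combination h
    have hQb' : 27*a^2*b'^2 + (4-18*a)*b' + (4*a-1) = 0 := by
      rw [hb'def, ha]
      have hq2n : u*(u-2)-2 ≠ 0 := by intro e; apply hq2'; linear_combination e
      field_simp
      ring
    have hvert' : (54*a^2*b'-18*a+4)*(u^2+4*u+1)^3 = -4*(2*u^2+2*u-1)^3 := by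
      rw [hb'def, ha]
      have hq2n : u*(u-2)-2 ≠ 0 := by intro e; apply hq2'; linear_combination e
      field_simp
      ring
    have hbb' : b = b' := by
      rcases lt_or_gt_of_ne hcrit with hc | hc
      · have hb'v : 0 < 54*a^2*b'-18*a+4 := by
          nlinarith [pow_pos hq1 3, pow_pos (show (0:ℝ) < -(2*u^2+2*u-1) by linarith) 3]
        have hbv : 0 < 54*a^2*b-18*a+4 := hsgn2 hc
        exact quad_root_eq hQb hQb' (by nlinarith)
      · have hb'v : 54*a^2*b'-18*a+4 < 0 := by
          nlinarith [pow_pos hq1 3, pow_pos (show (0:ℝ) < 2*u^2+2*u-1 by linarith) 3]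
        have hbv : 54*a^2*b-18*a+4 < 0 := hsgn1 hc
        exact quad_root_eq hQb hQb' (by nlinarith)
    exact ⟨u, hu0, hu1, hcrit, ha, by rw [hbb']⟩
  rcases lt_trichotomy (54*a^2*b-18*a+4) 0 with hs | hs | hs
  · -- right branch: a > 1/4, root in (u₀, 1)
    have ha14 : 1/4 < a := by
      by_contra h14
      push_neg at h14
      have h54 : 0 < 54*a^2*b := by positivity
      have h2 : 0 < 18*a-4 := by nlinarith
      have h4 : (54*a^2*b-18*a+4)^2 < (18*a-4)^2 := by nlinarith
      nlinarith [hs2, h4, mul_nonneg (mul_nonneg (le_of_lt (mul_pos ha0 ha0)) (show (0:ℝ) ≤ 36 by norm_num)) (show (0:ℝ) ≤ 3-12*a by linarith)]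
    have hf1 : fE a 1 = 36*a - 9 := by
      unfold fE; ring
    have hf1pos : 0 < fE a 1 := by rw [hf1]; linarith
    have hmem : (0:ℝ) ∈ Set.Ioo (fE a u₀) (fE a 1) := ⟨hfu₀neg, hf1pos⟩
    obtain ⟨u, huIoo, hfu⟩ := intermediate_value_Ioo (le_of_lt hu₀lt) hfc.continuousOn hmem
    have hcpos : 0 < 2*u^2+2*u-1 := by
      have h5 : 0 < (u-u₀)*(u+u₀+1) := mul_pos (by linarith [huIoo.1]) (by linarith [huIoo.1, hu₀pos])
      nlinarith [hu₀zero]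
    exact main u (lt_trans hu₀pos huIoo.1) huIoo.2 hfu (fun _ => hs) (fun hc => absurd hc (by linarith)) (ne_of_gt hcpos)
  · exfalso
    have h0 : (1-3*a)^3 = 0 := by nlinarith [hs2]
    have h1 : 1-3*a = 0 := pow_eq_zero_iff (by norm_num : (3:ℕ) ≠ 0) |>.mp h0
    linarith
  · have hf0pos : 0 < fE a 0 := by rw [hf0]; exact ha0
    have hmem : (0:ℝ) ∈ Set.Ioo (fE a u₀) (fE a 0) := ⟨hfu₀neg, hf0pos⟩
    obtain ⟨u, huIoo, hfu⟩ := intermediate_value_Ioo' (le_of_lt hu₀pos) hfc.continuousOn hmem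
    have hcneg : 2*u^2+2*u-1 < 0 := by
      have h5 : 0 < (u₀-u)*(u+u₀+1) := mul_pos (by linarith [huIoo.2]) (by linarith [huIoo.1, hu₀pos])
      nlinarith [hu₀zero]
    exact main u huIoo.1 (lt_trans huIoo.2 hu₀lt) hfu (fun hc => absurd hc (by linarith)) (fun _ => hs) (ne_of_lt hcneg)




lemma part2 (y₁ y₂ u : ℝ) (hy₁ : 0 < y₁) (hy₂ : 0 < y₂)
    (hu0 : 0 < u) (hu1 : u < 1) (hcrit : 2*u^2+2*u-1 ≠ 0)
    (ha : y₁^2 = -(u^2+2*u)*(u^2-2*u-2)/(u^2+4*u+1)^2)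
    (hb : y₂^2 = (1-u^2)*(u^2+4*u+1)/(u^2-2*u-2)^2) :
    ∃ t₁ t₂ t₃ t₄ : ℝ,
      t₁ ≠ t₂ ∧ t₁ ≠ t₃ ∧ t₁ ≠ t₄ ∧ t₂ ≠ t₃ ∧ t₂ ≠ t₄ ∧ t₃ ≠ t₄ ∧
      (EPoly y₁ y₂).roots
        = {(t₁ : ℂ), (t₁ : ℂ), (t₂ : ℂ), (t₂ : ℂ), (t₃ : ℂ), (t₄ : ℂ)} := by
  have hw2 : (Real.sqrt 3)^2 = 3 := Real.sq_sqrt (by norm_num)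
  have hwpos : 0 < Real.sqrt 3 := Real.sqrt_pos.mpr (by norm_num)
  -- basic nonvanishing
  have hq1 : 0 < u^2+4*u+1 := by nlinarith
  have hq2 : u^2-2*u-2 < 0 := by nlinarith
  have h2u1 : 0 < 2*u+1 := by linarith
  have hDn : 2*u^4+4*u^3-6*u^2-8*u-1 < 0 := by
    have hu2 : u^2 < 1 := by nlinarith
    have h4 : u^4 ≤ u^2 := by nlinarith [sq_nonneg u, hu2]
    have h3 : u^3 ≤ u^2 := by nlinarith [sq_nonneg u]
    nlinarith
  have hq1' : (u^2+4*u+1) ≠ 0 := ne_of_gt hq1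
  have hq2' : (u^2-2*u-2) ≠ 0 := ne_of_lt hq2
  have h2u1' : (2*u+1) ≠ 0 := ne_of_gt h2u1
  have hDn' : (2*u^4+4*u^3-6*u^2-8*u-1) ≠ 0 := ne_of_lt hDn
  have hMpos : 0 < (u^2+u+1)^2 := by positivity
  -- the roots
  set v : ℝ := -(u+2)/(2*u+1) with hv
  set t₃ : ℝ := (-(u^4-4*u^3-12*u^2-4*u+1) - Real.sqrt 3*(u^2+u+1)^2)/(2*u^4+4*u^3-6*u^2-8*u-1) with ht₃
  set t₄ : ℝ := (-(u^4-4*u^3-12*u^2-4*u+1) + Real.sqrt 3*(u^2+u+1)^2)/(2*u^4+4*u^3-6*u^2-8*u-1) with ht₄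
  -- symmetric functions of t₃ t₄
  have hsum : t₃ + t₄ = -(2*(u^4-4*u^3-12*u^2-4*u+1))/(2*u^4+4*u^3-6*u^2-8*u-1) := by
    rw [ht₃, ht₄, ← add_div]; ring_nf
  have hprod : t₃ * t₄ = (-u^4-8*u^3-6*u^2+4*u+2)/(2*u^4+4*u^3-6*u^2-8*u-1) := by
    rw [ht₃, ht₄, div_mul_div_comm]
    rw [show (-(u^4-4*u^3-12*u^2-4*u+1) - Real.sqrt 3*(u^2+u+1)^2) * (-(u^4-4*u^3-12*u^2-4*u+1) + Real.sqrt 3*(u^2+u+1)^2)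
        = (u^4-4*u^3-12*u^2-4*u+1)^2 - (Real.sqrt 3)^2*((u^2+u+1)^2)^2 by ring, hw2]
    rw [div_eq_div_iff (by positivity) hDn']
    ring
  -- distinctness
  have hvneg : v < 0 := by
    rw [hv]
    apply div_neg_of_neg_of_pos (by linarith) h2u1
  have huv : u ≠ v := by intro e; rw [← e] at hvneg; linarith
  have ht₃t₄ : t₃ ≠ t₄ := by
    have hd : t₄ - t₃ = (2*Real.sqrt 3*(u^2+u+1)^2)/(2*u^4+4*u^3-6*u^2-8*u-1) := by
      rw [ht₃, ht₄, div_sub_div_same]; ring_nf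
    have : t₄ - t₃ < 0 := by
      rw [hd]; apply div_neg_of_pos_of_neg (by positivity) hDn
    intro e; rw [e] at this; simp at this
  have hprod_u : (u - t₃)*(u - t₄) = ((2*u^2+2*u-1)*(u^2+4*u+1)*(u^2-2*u-2))/(2*u^4+4*u^3-6*u^2-8*u-1) := by
    rw [show (u - t₃)*(u - t₄) = u^2 - (t₃+t₄)*u + t₃*t₄ by ring, hsum, hprod]
    have hDnn : u*(u*(u*(u*2+4)-6)-8)-1 ≠ 0 := by intro e; apply hDn'; linear_combination e
    field_simp
    ring
  have hprod_v : (v - t₃)*(v - t₄) = -(3*((2*u^2+2*u-1)*(u^2+4*u+1)*(u^2-2*u-2)))/((2*u^4+4*u^3-6*u^2-8*u-1)*(2*u+1)^2) := by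
    rw [show (v - t₃)*(v - t₄) = v^2 - (t₃+t₄)*v + t₃*t₄ by ring, hsum, hprod, hv]
    have hDnn : u*(u*(u*(u*2+4)-6)-8)-1 ≠ 0 := by intro e; apply hDn'; linear_combination e
    have h2u1n : u*2+1 ≠ 0 := by intro e; apply h2u1'; linear_combination e
    field_simp
    ring
  have hrhs_ne : ((2*u^2+2*u-1)*(u^2+4*u+1)*(u^2-2*u-2))/(2*u^4+4*u^3-6*u^2-8*u-1) ≠ 0 :=
    div_ne_zero (mul_ne_zero (mul_ne_zero hcrit hq1') hq2') hDn'
  have hu_t₃ : u ≠ t₃ := by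
    intro e
    exact hrhs_ne (by rw [← hprod_u, ← e]; ring)
  have hu_t₄ : u ≠ t₄ := by
    intro e
    exact hrhs_ne (by rw [← hprod_u, ← e]; ring)
  have hrhs_ne' : -(3*((2*u^2+2*u-1)*(u^2+4*u+1)*(u^2-2*u-2)))/((2*u^4+4*u^3-6*u^2-8*u-1)*(2*u+1)^2) ≠ 0 := by
    apply div_ne_zero _ (mul_ne_zero hDn' (pow_ne_zero 2 h2u1'))
    simp only [neg_ne_zero]
    exact mul_ne_zero (by norm_num) (mul_ne_zero (mul_ne_zero hcrit hq1') hq2')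
  have hv_t₃ : v ≠ t₃ := by
    intro e
    exact hrhs_ne' (by rw [← hprod_v, ← e]; ring)
  have hv_t₄ : v ≠ t₄ := by
    intro e
    exact hrhs_ne' (by rw [← hprod_v, ← e]; ring)
  -- complex casts
  have castne : ∀ r : ℝ, r ≠ 0 → ((r:ℂ) ≠ 0) := fun r hr => Complex.ofReal_ne_zero.mpr hr
  have hq1C : ((u:ℂ)^2+4*(u:ℂ)+1) ≠ 0 := by
    have := castne _ hq1'; push_cast at this; exact this
  have hq2C : ((u:ℂ)^2-2*(u:ℂ)-2) ≠ 0 := by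
    have := castne _ hq2'; push_cast at this; exact this
  have h2u1C : (2*(u:ℂ)+1) ≠ 0 := by
    have := castne _ h2u1'; push_cast at this; exact this
  have hDnC : (2*(u:ℂ)^4+4*(u:ℂ)^3-6*(u:ℂ)^2-8*(u:ℂ)-1) ≠ 0 := by
    have := castne _ hDn'; push_cast at this; exact this
  have hL : (y₁^2+y₂^2+2 : ℝ) ≠ 0 := by positivity
  have hLC : ((y₁:ℂ)^2+(y₂:ℂ)^2+2) ≠ 0 := by
    have := castne _ hL; push_cast at this; exact this
  have haC : ((y₁:ℂ))^2 = -((u:ℂ)^2+2*(u:ℂ))*((u:ℂ)^2-2*(u:ℂ)-2)/((u:ℂ)^2+4*(u:ℂ)+1)^2 := by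
    have := congrArg (fun r : ℝ => (r:ℂ)) ha; push_cast at this; exact this
  have hbC : ((y₂:ℂ))^2 = (1-(u:ℂ)^2)*((u:ℂ)^2+4*(u:ℂ)+1)/((u:ℂ)^2-2*(u:ℂ)-2)^2 := by
    have := congrArg (fun r : ℝ => (r:ℂ)) hb; push_cast at this; exact this
  have hvC : ((v:ℂ)) = -((u:ℂ)+2)/(2*(u:ℂ)+1) := by
    have := congrArg (fun r : ℝ => (r:ℂ)) hv; push_cast at this; exact this
  have hsumC : ((t₃:ℂ)) + ((t₄:ℂ)) = -(2*((u:ℂ)^4-4*(u:ℂ)^3-12*(u:ℂ)^2-4*(u:ℂ)+1))/(2*(u:ℂ)^4+4*(u:ℂ)^3-6*(u:ℂ)^2-8*(u:ℂ)-1) := by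
    have := congrArg (fun r : ℝ => (r:ℂ)) hsum; push_cast at this; exact this
  have hprodC : ((t₃:ℂ)) * ((t₄:ℂ)) = (-(u:ℂ)^4-8*(u:ℂ)^3-6*(u:ℂ)^2+4*(u:ℂ)+2)/(2*(u:ℂ)^4+4*(u:ℂ)^3-6*(u:ℂ)^2-8*(u:ℂ)-1) := by
    have := congrArg (fun r : ℝ => (r:ℂ)) hprod; push_cast at this; exact this
  have hfact : EPoly y₁ y₂ = C ((y₁:ℂ)^2+(y₂:ℂ)^2+2) * ((X - C (u:ℂ))^2 * (X - C (v:ℂ))^2 * ((X - C (t₃:ℂ)) * (X - C (t₄:ℂ)))) := by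
    apply Polynomial.funext
    intro x
    simp only [EPoly, eval_add, eval_mul, eval_pow, eval_sub, eval_C, eval_X, eval_ofNat, eval_one]
    rw [show (x - (t₃:ℂ))*(x - (t₄:ℂ)) = x^2 - ((t₃:ℂ)+(t₄:ℂ))*x + (t₃:ℂ)*(t₄:ℂ) from by ring]
    rw [haC, hbC, hvC, hsumC, hprodC]
    have hDnnC : (u:ℂ)*((u:ℂ)*((u:ℂ)*((u:ℂ)*2+4)-6)-8)-1 ≠ 0 := by intro e; apply hDnC; linear_combination e
    have h2u1nC : (u:ℂ)*2+1 ≠ 0 := by intro e; apply h2u1C; linear_combination e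
    have hq1nC : (u:ℂ)*((u:ℂ)+4)+1 ≠ 0 := by intro e; apply hq1C; linear_combination e
    have hq2nC : (u:ℂ)*((u:ℂ)-2)-2 ≠ 0 := by intro e; apply hq2C; linear_combination e
    field_simp
    ring
  have hmul : (X - C (u:ℂ))^2 * (X - C (v:ℂ))^2 * ((X - C (t₃:ℂ)) * (X - C (t₄:ℂ)))
      = (Multiset.map (fun z => X - C z) ({(u:ℂ), (u:ℂ), (v:ℂ), (v:ℂ), (t₃:ℂ), (t₄:ℂ)} : Multiset ℂ)).prod := by
    simp only [Multiset.insert_eq_cons, Multiset.map_cons, Multiset.map_singleton,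
      Multiset.prod_cons, Multiset.prod_singleton]
    ring
  refine ⟨u, v, t₃, t₄, huv, hu_t₃, hu_t₄, hv_t₃, hv_t₄, ht₃t₄, ?_⟩
  rw [hfact, Polynomial.roots_C_mul _ hLC, hmul, Polynomial.roots_multiset_prod_X_sub_C]


end Aux

/-- on the interior caustic 𝖢₂ (the curve minus the cuspidal
point), `E` has exactly four distinct complex roots, all real: two double roots
and two simple roots. -/
theorem stmt_15 (y₁ y₂ : ℝ) (hy₁ : 0 < y₁) (hy₂ : 0 < y₂)
    (h : 27 * y₁^4 * y₂^4 - 18 * y₁^2 * y₂^2 + 4 * y₁^2 + 4 * y₂^2 = 1)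
    (hne : ((y₁, y₂) : ℝ × ℝ) ≠ (1 / Real.sqrt 3, 1 / Real.sqrt 3)) :
    ∃ t₁ t₂ t₃ t₄ : ℝ,
      t₁ ≠ t₂ ∧ t₁ ≠ t₃ ∧ t₁ ≠ t₄ ∧ t₂ ≠ t₃ ∧ t₂ ≠ t₄ ∧ t₃ ≠ t₄ ∧
      (EPoly y₁ y₂).roots
        = {(t₁ : ℂ), (t₁ : ℂ), (t₂ : ℂ), (t₂ : ℂ), (t₃ : ℂ), (t₄ : ℂ)} := by
  have hw2 : (Real.sqrt 3)^2 = 3 := Real.sq_sqrt (by norm_num)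
  have hwpos : 0 < Real.sqrt 3 := Real.sqrt_pos.mpr (by norm_num)
  have h' : 27*(y₁^2)^2*(y₂^2)^2 - 18*(y₁^2)*(y₂^2) + 4*(y₁^2) + 4*(y₂^2) = 1 := by
    linear_combination h
  have hne' : ¬(y₁^2 = 1/3 ∧ y₂^2 = 1/3) := by
    rintro ⟨h1, h2⟩
    apply hne
    have e1 : y₁ = 1 / Real.sqrt 3 := by
      have k1 : (y₁ * Real.sqrt 3 - 1) * (y₁ * Real.sqrt 3 + 1) = 0 := by
        linear_combination Real.sqrt 3^2 * h1 + (1/3)*hw2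
      have k2 : 0 < y₁ * Real.sqrt 3 + 1 := by positivity
      rcases mul_eq_zero.mp k1 with k | k
      · field_simp
        linarith
      · linarith
    have e2 : y₂ = 1 / Real.sqrt 3 := by
      have k1 : (y₂ * Real.sqrt 3 - 1) * (y₂ * Real.sqrt 3 + 1) = 0 := by
        linear_combination Real.sqrt 3^2 * h2 + (1/3)*hw2
      have k2 : 0 < y₂ * Real.sqrt 3 + 1 := by positivity
      rcases mul_eq_zero.mp k1 with k | k
      · field_simp
        linarith
      · linarith
    rw [e1, e2]
  obtain ⟨u, hu0, hu1, hcrit, ha, hb⟩ :=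
    key (y₁^2) (y₂^2) (by positivity) (by positivity) h' hne'
  exact part2 y₁ y₂ u hy₁ hy₂ hu0 hu1 hcrit ha hb
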